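/- The vertex set of the fully truncated hypercube TC_n (n ≥ 2), i.e., the set of points of R^n having exactly one coordinate equal to 0 and all other coordinates equal to ±1, with the induced Euclidean metric, is 2-point homogeneous. -/

import Mathlib

open Finset

/-- The vertex set of the fully truncated hypercube `TCₙ`: points of `ℝⁿ` with exactly one
coordinate equal to `0` and all other coordinates equal to `±1`. -/
def TCset (n : ℕ) : Set (EuclideanSpace ℝ (Fin n)) :=
  {p | ∃ i₀ : Fin n, p i₀ = 0 ∧ ∀ i : Fin n, i ≠ i₀ → p i = 1 ∨ p i = -1}

/-- class of a pair of coordinates, up to simultaneous sign change -/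
noncomputable def TCcl (x y : ℝ) : Fin 5 :=
  if x = 0 then (if y = 0 then 0 else 1)
  else if y = 0 then 2
  else if x = y then 3 else 4

noncomputable def TCwt : Fin 5 → ℕ := ![0, 1, 1, 0, 4]

lemma TC_vals {n : ℕ} {p : EuclideanSpace ℝ (Fin n)} (hp : p ∈ TCset n) (a : Fin n) :
    p a = 0 ∨ p a = 1 ∨ p a = -1 := by
  obtain ⟨i₀, h0, h1⟩ := hp
  by_cases h : a = i₀
  · subst h; exact Or.inl h0
  · rcases h1 a h with h | h <;> simp [h]

lemma wt_eq {x y : ℝ} (hx : x = 0 ∨ x = 1 ∨ x = -1) (hy : y = 0 ∨ y = 1 ∨ y = -1) :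
    (x - y) ^ 2 = (TCwt (TCcl x y) : ℝ) := by
  rcases hx with h | h | h <;> rcases hy with h' | h' | h' <;>
    subst h <;> subst h' <;> norm_num [TCcl, TCwt] <;> simp [Matrix.cons_val]

/-- two functions with equal fiber cardinalities differ by a permutation -/
lemma exists_perm {n : ℕ} {C : Type*} [Fintype C] [DecidableEq C] (f g : Fin n → C)
    (h : ∀ c : C, Fintype.card {a // f a = c} = Fintype.card {a // g a = c}) :
    ∃ σ : Equiv.Perm (Fin n), ∀ a, g (σ a) = f a := by
  let E : ∀ c : C, {a // f a = c} ≃ {a // g a = c} := fun c => Fintype.equivOfCardEq (h c)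
  refine ⟨(Equiv.sigmaFiberEquiv f).symm.trans
    ((Equiv.sigmaCongrRight E).trans (Equiv.sigmaFiberEquiv g)), fun a => ?_⟩
  exact (E (f a) ⟨a, rfl⟩).2

section maps
variable {n : ℕ} (σ : Equiv.Perm (Fin n)) (ε : Fin n → ℝ)

noncomputable def TCmap : EuclideanSpace ℝ (Fin n) → EuclideanSpace ℝ (Fin n) :=
  fun p => WithLp.toLp 2 (fun i => ε i * p (σ.symm i))

lemma TCmap_mem (hε : ∀ i, ε i = 1 ∨ ε i = -1) {p : EuclideanSpace ℝ (Fin n)}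
    (hp : p ∈ TCset n) : TCmap σ ε p ∈ TCset n := by
  obtain ⟨i₀, h0, h1⟩ := hp
  refine ⟨σ i₀, ?_, fun i hi => ?_⟩
  · show ε (σ i₀) * p (σ.symm (σ i₀)) = 0
    rw [σ.symm_apply_apply, h0, mul_zero]
  · have : σ.symm i ≠ i₀ := fun h => hi (by rw [← h]; simp)
    rcases h1 _ this with h | h <;> rcases hε i with h' | h' <;>
      simp [TCmap, h, h'] <;> norm_num

lemma TCmap_dist (hε : ∀ i, ε i = 1 ∨ ε i = -1) (p q : EuclideanSpace ℝ (Fin n)) :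
    dist (TCmap σ ε p) (TCmap σ ε q) = dist p q := by
  rw [EuclideanSpace.dist_eq, EuclideanSpace.dist_eq]
  congr 1
  rw [← Equiv.sum_comp σ.symm (fun a => dist (p a) (q a) ^ 2)]
  refine Finset.sum_congr rfl fun i _ => ?_
  have h2 : (ε i) ^ 2 = 1 := by rcases hε i with h | h <;> rw [h] <;> norm_num
  simp only [TCmap, PiLp.toLp_apply, Real.dist_eq]
  rw [← abs_pow, ← abs_pow]
  rw [show ε i * p (σ.symm i) - ε i * q (σ.symm i) = ε i * (p (σ.symm i) - q (σ.symm i)) by ring]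
  rw [mul_pow, h2, one_mul]

lemma TCmap_inv (hε : ∀ i, ε i = 1 ∨ ε i = -1) (p : EuclideanSpace ℝ (Fin n)) :
    TCmap σ.symm (fun a => ε (σ a)) (TCmap σ ε p) = p := by
  ext a
  have h2 : ε (σ a) * ε (σ a) = 1 := by rcases hε (σ a) with h | h <;> rw [h] <;> norm_num
  simp only [TCmap, PiLp.toLp_apply, Equiv.symm_symm]
  rw [← mul_assoc, h2, one_mul]
  exact congrArg p (σ.symm_apply_apply a)

lemma TCmap_inv' (hε : ∀ i, ε i = 1 ∨ ε i = -1) (q : EuclideanSpace ℝ (Fin n)) :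
    TCmap σ ε (TCmap σ.symm (fun a => ε (σ a)) q) = q := by
  ext i
  have h2 : ε i * ε i = 1 := by rcases hε i with h | h <;> rw [h] <;> norm_num
  simp only [TCmap, PiLp.toLp_apply, Equiv.symm_symm]
  rw [σ.apply_symm_apply, ← mul_assoc, h2, one_mul]

/-- the isometry of `TCset n` induced by a signed permutation -/
noncomputable def TCiso (hε : ∀ i, ε i = 1 ∨ ε i = -1) : ↥(TCset n) ≃ᵢ ↥(TCset n) where
  toFun := fun p => ⟨TCmap σ ε p, TCmap_mem σ ε hε p.2⟩
  invFun := fun q => ⟨TCmap σ.symm (fun a => ε (σ a)) q,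
    TCmap_mem σ.symm _ (fun a => hε (σ a)) q.2⟩
  left_inv := fun p => Subtype.ext (TCmap_inv σ ε hε p)
  right_inv := fun q => Subtype.ext (TCmap_inv' σ ε hε q)
  isometry_toFun := Isometry.of_dist_eq fun p q => by
    rw [Subtype.dist_eq, Subtype.dist_eq]
    exact TCmap_dist σ ε hε p q

end maps

/-- per-coordinate sign choice works -/
lemma sign_works {x1 x2 y1 y2 : ℝ} (hx1 : x1 = 0 ∨ x1 = 1 ∨ x1 = -1)
    (hx2 : x2 = 0 ∨ x2 = 1 ∨ x2 = -1) (hy1 : y1 = 0 ∨ y1 = 1 ∨ y1 = -1)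
    (hy2 : y2 = 0 ∨ y2 = 1 ∨ y2 = -1) (hcl : TCcl y1 y2 = TCcl x1 x2) :
    (if x1 ≠ 0 then y1 * x1 else if x2 ≠ 0 then y2 * x2 else 1) * x1 = y1 ∧
    (if x1 ≠ 0 then y1 * x1 else if x2 ≠ 0 then y2 * x2 else 1) * x2 = y2 ∧
    ((if x1 ≠ 0 then y1 * x1 else if x2 ≠ 0 then y2 * x2 else 1) = 1 ∨
     (if x1 ≠ 0 then y1 * x1 else if x2 ≠ 0 then y2 * x2 else 1) = -1) := by
  rcases hx1 with h | h | h <;> rcases hx2 with h' | h' | h' <;>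
    rcases hy1 with g | g | g <;> rcases hy2 with g' | g' | g' <;>
    subst h <;> subst h' <;> subst g <;> subst g' <;>
    norm_num [TCcl] at hcl <;> norm_num at ⊢ <;> simp_all

lemma cl_01 (x y : ℝ) : TCcl x y = 0 ∨ TCcl x y = 1 ↔ x = 0 := by
  unfold TCcl; split_ifs <;> simp_all
lemma cl_02 (x y : ℝ) : TCcl x y = 0 ∨ TCcl x y = 2 ↔ y = 0 := by
  unfold TCcl; split_ifs <;> simp_all

lemma zero_filter {n : ℕ} {p : EuclideanSpace ℝ (Fin n)} (hp : p ∈ TCset n) :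
    (univ.filter (fun a => p a = 0)).card = 1 := by
  obtain ⟨i₀, h0, h1⟩ := hp
  have : univ.filter (fun a => p a = 0) = {i₀} := by
    ext a
    simp only [mem_filter, mem_univ, true_and, mem_singleton]
    constructor
    · intro h
      by_contra hc
      rcases h1 a hc with h' | h' <;> rw [h'] at h <;> norm_num at h
    · intro h; rw [h]; exact h0
  rw [this, card_singleton]

section counting
variable {n : ℕ} {A₁ A₂ : EuclideanSpace ℝ (Fin n)}

noncomputable def Nc (A₁ A₂ : EuclideanSpace ℝ (Fin n)) (c : Fin 5) : ℕ :=
  (univ.filter (fun a => TCcl (A₁ a) (A₂ a) = c)).card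

lemma Nc_01 (h₁ : A₁ ∈ TCset n) : Nc A₁ A₂ 0 + Nc A₁ A₂ 1 = 1 := by
  rw [← zero_filter h₁]
  rw [show (univ.filter (fun a => A₁ a = 0)) =
      univ.filter (fun a => TCcl (A₁ a) (A₂ a) = 0 ∨ TCcl (A₁ a) (A₂ a) = 1) by
    apply filter_congr; intro a _; simp [cl_01]]
  rw [filter_or, card_union_of_disjoint]
  · rfl
  · rw [disjoint_filter]
    intro a _ h h'
    rw [h] at h'
    exact absurd h' (by decide)

lemma Nc_02 (h₂ : A₂ ∈ TCset n) : Nc A₁ A₂ 0 + Nc A₁ A₂ 2 = 1 := by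
  rw [← zero_filter h₂]
  rw [show (univ.filter (fun a => A₂ a = 0)) =
      univ.filter (fun a => TCcl (A₁ a) (A₂ a) = 0 ∨ TCcl (A₁ a) (A₂ a) = 2) by
    apply filter_congr; intro a _; simp [cl_02]]
  rw [filter_or, card_union_of_disjoint]
  · rfl
  · rw [disjoint_filter]
    intro a _ h h'
    rw [h] at h'
    exact absurd h' (by decide)

lemma Nc_total : ∑ c : Fin 5, Nc A₁ A₂ c = n := by
  have := Finset.card_eq_sum_card_fiberwise
    (f := fun a => TCcl (A₁ a) (A₂ a)) (s := univ) (t := univ) (fun x _ => mem_univ _)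
  simpa [Nc] using this.symm

lemma dist_sq_eq (h₁ : A₁ ∈ TCset n) (h₂ : A₂ ∈ TCset n) :
    dist A₁ A₂ ^ 2 = ((Nc A₁ A₂ 1 + Nc A₁ A₂ 2 + 4 * Nc A₁ A₂ 4 : ℕ) : ℝ) := by
  rw [EuclideanSpace.dist_eq, Real.sq_sqrt (by positivity)]
  have step1 : ∀ i, dist (A₁ i) (A₂ i) ^ 2 = ((TCwt (TCcl (A₁ i) (A₂ i)) : ℕ) : ℝ) := by
    intro i
    rw [Real.dist_eq, sq_abs]
    exact wt_eq (TC_vals h₁ i) (TC_vals h₂ i)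
  rw [Finset.sum_congr rfl (fun i _ => step1 i)]
  rw [← Finset.sum_fiberwise univ (fun a => TCcl (A₁ a) (A₂ a))
    (fun a => ((TCwt (TCcl (A₁ a) (A₂ a)) : ℕ) : ℝ))]
  have step2 : ∀ c : Fin 5, ∑ a ∈ univ.filter (fun a => TCcl (A₁ a) (A₂ a) = c),
      ((TCwt (TCcl (A₁ a) (A₂ a)) : ℕ) : ℝ) = (Nc A₁ A₂ c : ℕ) * (TCwt c : ℝ) := by
    intro c
    rw [Finset.sum_congr rfl (fun a ha => by
      rw [(Finset.mem_filter.mp ha).2])]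
    rw [Finset.sum_const, Nc, nsmul_eq_mul]
  rw [Finset.sum_congr rfl (fun c _ => step2 c)]
  rw [Fin.sum_univ_five]
  have w0 : TCwt 0 = 0 := rfl
  have w1 : TCwt 1 = 1 := rfl
  have w2 : TCwt 2 = 1 := rfl
  have w3 : TCwt 3 = 0 := rfl
  have w4 : TCwt 4 = 4 := rfl
  rw [w0, w1, w2, w3, w4]
  push_cast
  ring

end counting

/-- the vertex set of the fully truncated hypercube `TCₙ` (`n ≥ 2`) with the
induced Euclidean metric is 2-point homogeneous. -/
theorem stmt_5 (n : ℕ) (hn : 2 ≤ n) :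
    ∀ A₁ A₂ B₁ B₂ : ↥(TCset n), dist A₁ A₂ = dist B₁ B₂ →
      ∃ e : ↥(TCset n) ≃ᵢ ↥(TCset n), e A₁ = B₁ ∧ e A₂ = B₂ := by
  intro A₁ A₂ B₁ B₂ hd
  have hdist : dist (A₁ : EuclideanSpace ℝ (Fin n)) A₂ = dist (B₁ : EuclideanSpace ℝ (Fin n)) B₂ := by
    rw [← Subtype.dist_eq, ← Subtype.dist_eq]; exact hd
  have hsq : ((Nc A₁.1 A₂.1 1 + Nc A₁.1 A₂.1 2 + 4 * Nc A₁.1 A₂.1 4 : ℕ) : ℝ)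
      = ((Nc B₁.1 B₂.1 1 + Nc B₁.1 B₂.1 2 + 4 * Nc B₁.1 B₂.1 4 : ℕ) : ℝ) := by
    rw [← dist_sq_eq A₁.2 A₂.2, ← dist_sq_eq B₁.2 B₂.2, hdist]
  have hnat : Nc A₁.1 A₂.1 1 + Nc A₁.1 A₂.1 2 + 4 * Nc A₁.1 A₂.1 4
      = Nc B₁.1 B₂.1 1 + Nc B₁.1 B₂.1 2 + 4 * Nc B₁.1 B₂.1 4 := Nat.cast_injective hsq
  have hA01 := Nc_01 (A₂ := A₂.1) A₁.2
  have hA02 := Nc_02 (A₁ := A₁.1) A₂.2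
  have hB01 := Nc_01 (A₂ := B₂.1) B₁.2
  have hB02 := Nc_02 (A₁ := B₁.1) B₂.2
  have hAt := Nc_total (A₁ := A₁.1) (A₂ := A₂.1)
  have hBt := Nc_total (A₁ := B₁.1) (A₂ := B₂.1)
  rw [Fin.sum_univ_five] at hAt hBt
  have h0 : Nc A₁.1 A₂.1 0 = Nc B₁.1 B₂.1 0 := by omega
  have h1 : Nc A₁.1 A₂.1 1 = Nc B₁.1 B₂.1 1 := by omega
  have h2 : Nc A₁.1 A₂.1 2 = Nc B₁.1 B₂.1 2 := by omega
  have h3 : Nc A₁.1 A₂.1 3 = Nc B₁.1 B₂.1 3 := by omega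
  have h4 : Nc A₁.1 A₂.1 4 = Nc B₁.1 B₂.1 4 := by omega
  have hcard : ∀ c : Fin 5, Nc A₁.1 A₂.1 c = Nc B₁.1 B₂.1 c := by
    intro c
    fin_cases c
    · exact h0
    · exact h1
    · exact h2
    · exact h3
    · exact h4
  have hcard' : ∀ c : Fin 5, Fintype.card {a // TCcl (A₁.1 a) (A₂.1 a) = c}
      = Fintype.card {a // TCcl (B₁.1 a) (B₂.1 a) = c} := by
    intro c
    rw [Fintype.card_subtype, Fintype.card_subtype]
    exact hcard c
  obtain ⟨σ, hσ⟩ := exists_perm (fun a => TCcl (A₁.1 a) (A₂.1 a))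
    (fun a => TCcl (B₁.1 a) (B₂.1 a)) hcard'
  set ε : Fin n → ℝ := fun i =>
    if A₁.1 (σ.symm i) ≠ 0 then B₁.1 i * A₁.1 (σ.symm i)
    else if A₂.1 (σ.symm i) ≠ 0 then B₂.1 i * A₂.1 (σ.symm i) else 1 with hεdef
  have key : ∀ i : Fin n, ε i * A₁.1 (σ.symm i) = B₁.1 i ∧ ε i * A₂.1 (σ.symm i) = B₂.1 i ∧
      (ε i = 1 ∨ ε i = -1) := by
    intro i
    have hcl : TCcl (B₁.1 i) (B₂.1 i) = TCcl (A₁.1 (σ.symm i)) (A₂.1 (σ.symm i)) := by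
      have := hσ (σ.symm i)
      rwa [σ.apply_symm_apply] at this
    exact sign_works (TC_vals A₁.2 _) (TC_vals A₂.2 _) (TC_vals B₁.2 i) (TC_vals B₂.2 i) hcl
  have hε : ∀ i, ε i = 1 ∨ ε i = -1 := fun i => (key i).2.2
  refine ⟨TCiso σ ε hε, ?_, ?_⟩
  · exact Subtype.ext (PiLp.ext fun i => (key i).1)
  · exact Subtype.ext (PiLp.ext fun i => (key i).2.1)
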